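/- For r ≥ 3, for every mismatched pair {P, Q} of r-patterns there exists an index j with 1 ≤ j ≤ r such that the pair {P^{−j}, Q^{−j}} of (r−1)-patterns is also mismatched, where P^{−j} denotes the pattern obtained by deleting the j-th vertex of each edge. -/

import Mathlib

/-- An `r`-pattern: a word of length `2r` over `{A,B}` (`false` = `A`, `true` = `B`)
with `r` occurrences of each letter, starting with `A`. -/
def IsPattern (r : ℕ) (P : List Bool) : Prop :=
  P.length = 2 * r ∧ P.count true = r ∧ P.head? = some false

/-- The word obtained by concatenating blocks `A^t B^t` (`false`) or `B^t A^t` (`true`). -/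
def wordOfBlocks (blocks : List (ℕ × Bool)) : List Bool :=
  blocks.flatMap fun b => List.replicate b.1 b.2 ++ List.replicate b.1 (!b.2)

/-- `P` is collectable: it splits into consecutive blocks `A^t B^t` or `B^t A^t`. -/
def HasBlockSplitting (r : ℕ) (P : List Bool) : Prop :=
  ∃ blocks : List (ℕ × Bool), (∀ b ∈ blocks, 0 < b.1) ∧
    (blocks.map Prod.fst).sum = r ∧ P = wordOfBlocks blocks

/-- Two collectable patterns are harmonious when they have the same composition, i.e.,
they admit block splittings with the same sequence of block sizes. -/
def SameComposition (P Q : List Bool) : Prop :=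
  ∃ b₁ b₂ : List (ℕ × Bool), (∀ b ∈ b₁, 0 < b.1) ∧ (∀ b ∈ b₂, 0 < b.1) ∧
    P = wordOfBlocks b₁ ∧ Q = wordOfBlocks b₂ ∧ b₁.map Prod.fst = b₂.map Prod.fst

/-- A mismatched pair of `r`-patterns: exactly one of them is collectable, or both are
collectable but with different compositions. -/
def Mismatch (r : ℕ) (P Q : List Bool) : Prop :=
  P ≠ Q ∧ ((HasBlockSplitting r P ∧ ¬ HasBlockSplitting r Q) ∨
    (¬ HasBlockSplitting r P ∧ HasBlockSplitting r Q) ∨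
    (HasBlockSplitting r P ∧ HasBlockSplitting r Q ∧ ¬ SameComposition P Q))

/-- Remove the occurrence number `j` (counting from `0`) of the letter `b` from a word. -/
def removeOcc (b : Bool) : ℕ → List Bool → List Bool
  | _, [] => []
  | j, a :: l =>
      if a = b then (if j = 0 then l else a :: removeOcc b (j - 1) l)
      else a :: removeOcc b j l

/-- Normalize a word so that it starts with `A`, flipping all letters if needed. -/
def canonize (l : List Bool) : List Bool :=
  if l.head? = some true then l.map (fun b => !b) else l

/-- `P^{−j}`: the `(r−1)`-pattern obtained from `P` by deleting the `j`-th vertex of each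
edge, i.e., the `j`-th occurrence of `A` and of `B`, then normalizing to start with `A`. -/
def deleteLetter (j : ℕ) (P : List Bool) : List Bool :=
  canonize (removeOcc true (j - 1) (removeOcc false (j - 1) P))

section Aux

open List

lemma wordOfBlocks_cons (t : ℕ) (x : Bool) (bs : List (ℕ × Bool)) :
    wordOfBlocks ((t, x) :: bs) =
      List.replicate t x ++ (List.replicate t (!x) ++ wordOfBlocks bs) := by
  simp [wordOfBlocks]

lemma wordOfBlocks_nil : wordOfBlocks [] = [] := rfl

lemma count_wordOfBlocks (b : Bool) (bs : List (ℕ × Bool)) :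
    (wordOfBlocks bs).count b = (bs.map Prod.fst).sum := by
  induction bs with
  | nil => simp [wordOfBlocks]
  | cons hd tl ih =>
    obtain ⟨t, x⟩ := hd
    rw [wordOfBlocks_cons]
    cases b <;> cases x <;>
      simp [List.count_append, List.count_replicate, ih]

lemma count_true_add_count_false (l : List Bool) :
    l.count true + l.count false = l.length := by
  induction l with
  | nil => simp
  | cons a l ih => cases a <;> simp [List.count_cons] <;> omega

/-- Collectable word (without the sum constraint). -/
def Collectable (W : List Bool) : Prop :=
  ∃ bs : List (ℕ × Bool), (∀ b ∈ bs, 0 < b.1) ∧ W = wordOfBlocks bs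

lemma hbs_of_collC {W : List Bool} {r : ℕ} (h : Collectable W)
    (hc : W.count true = r) : HasBlockSplitting r W := by
  obtain ⟨bs, hpos, he⟩ := h
  exact ⟨bs, hpos, by rw [← count_wordOfBlocks true, ← he, hc], he⟩

lemma collectable_of_hbs {W : List Bool} {r : ℕ} (h : HasBlockSplitting r W) :
    Collectable W := by
  obtain ⟨bs, hpos, _, he⟩ := h
  exact ⟨bs, hpos, he⟩

end Aux
section RemoveOcc

lemma removeOcc_cons_self (b : Bool) (k : ℕ) (l : List Bool) :
    removeOcc b k (b :: l) = if k = 0 then l else b :: removeOcc b (k - 1) l := by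
  simp [removeOcc]

lemma removeOcc_cons_ne (a b : Bool) (hab : a ≠ b) (k : ℕ) (l : List Bool) :
    removeOcc b k (a :: l) = a :: removeOcc b k l := by
  simp [removeOcc, hab]

lemma removeOcc_append_right (b : Bool) (k : ℕ) (U V : List Bool)
    (h : U.count b ≤ k) :
    removeOcc b k (U ++ V) = U ++ removeOcc b (k - U.count b) V := by
  induction U generalizing k with
  | nil => simp
  | cons a U ih =>
    by_cases hab : a = b
    · subst hab
      have h' : U.count a + 1 ≤ k := by
        have := h; simp [List.count_cons] at this; omega
      rw [List.cons_append, removeOcc_cons_self, if_neg (by omega : ¬ k = 0),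
        ih _ (by omega),
        show k - 1 - U.count a = k - (a :: U).count a from by
          simp [List.count_cons]; omega]
      simp
    · rw [List.cons_append, removeOcc_cons_ne _ _ hab, ih]
      · simp [List.count_cons, hab]
      · have := h; simp [List.count_cons, hab] at this; omega

lemma removeOcc_append_left (b : Bool) (k : ℕ) (U V : List Bool)
    (h : k < U.count b) :
    removeOcc b k (U ++ V) = removeOcc b k U ++ V := by
  induction U generalizing k with
  | nil => simp at h
  | cons a U ih =>
    by_cases hab : a = b
    · subst hab
      by_cases hk : k = 0
      · subst hk
        rw [List.cons_append, removeOcc_cons_self, removeOcc_cons_self]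
        simp
      · rw [List.cons_append, removeOcc_cons_self, if_neg hk,
          removeOcc_cons_self, if_neg hk, ih, List.cons_append]
        have := h; simp [List.count_cons] at this; omega
    · rw [List.cons_append, removeOcc_cons_ne _ _ hab, removeOcc_cons_ne _ _ hab,
        ih, List.cons_append]
      have := h; simp [List.count_cons, hab] at this; omega

lemma count_removeOcc_ne (b b' : Bool) (hb : b' ≠ b) (k : ℕ) (U : List Bool) :
    (removeOcc b k U).count b' = U.count b' := by
  induction U generalizing k with
  | nil => simp [removeOcc]
  | cons a U ih =>
    by_cases hab : a = b
    · subst hab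
      by_cases hk : k = 0
      · subst hk; rw [removeOcc_cons_self]; simp [List.count_cons, Ne.symm hb]
      · rw [removeOcc_cons_self, if_neg hk]
        simp [List.count_cons, ih]
    · rw [removeOcc_cons_ne _ _ hab]
      simp [List.count_cons, ih]

lemma count_removeOcc_self (b : Bool) (k : ℕ) (U : List Bool)
    (h : k < U.count b) :
    (removeOcc b k U).count b = U.count b - 1 := by
  induction U generalizing k with
  | nil => simp at h
  | cons a U ih =>
    by_cases hab : a = b
    · subst hab
      by_cases hk : k = 0
      · subst hk; rw [removeOcc_cons_self]; simp [List.count_cons]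
      · have hcnt : k - 1 < U.count a := by
          have := h; simp [List.count_cons] at this; omega
        rw [removeOcc_cons_self, if_neg hk]
        simp [List.count_cons, ih _ hcnt]
        omega
    · have hcnt : k < U.count b := by
        have := h; simp [List.count_cons, hab] at this; omega
      rw [removeOcc_cons_ne _ _ hab]
      simp [List.count_cons, hab, ih _ hcnt]

lemma removeOcc_replicate_self (b : Bool) (k n : ℕ) (h : k < n) :
    removeOcc b k (List.replicate n b) = List.replicate (n - 1) b := by
  induction n generalizing k with
  | zero => omega
  | succ n ih =>
    by_cases hk : k = 0
    · subst hk; rw [List.replicate_succ, removeOcc_cons_self]; simp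
    · have hn : 1 ≤ n := by omega
      rw [List.replicate_succ, removeOcc_cons_self, if_neg hk, ih _ (by omega),
        show n + 1 - 1 = (n - 1) + 1 by omega, List.replicate_succ]

end RemoveOcc
section CollC

/-- flip the orientation of every block -/
def flipB (bs : List (ℕ × Bool)) : List (ℕ × Bool) := bs.map fun p => (p.1, !p.2)

lemma map_not_wordOfBlocks (bs : List (ℕ × Bool)) :
    (wordOfBlocks bs).map (fun b => !b) = wordOfBlocks (flipB bs) := by
  induction bs with
  | nil => simp [wordOfBlocks, flipB]
  | cons hd tl ih =>
    obtain ⟨t, x⟩ := hd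
    rw [wordOfBlocks_cons, show flipB ((t,x)::tl) = (t,!x) :: flipB tl from rfl,
      wordOfBlocks_cons]
    simp [ih, Bool.not_not]

lemma flipB_pos {bs : List (ℕ × Bool)} (h : ∀ b ∈ bs, 0 < b.1) :
    ∀ b ∈ flipB bs, 0 < b.1 := by
  intro b hb
  simp only [flipB, List.mem_map] at hb
  obtain ⟨p, hp, hb⟩ := hb
  subst hb
  exact h p hp

lemma flipB_map_fst (bs : List (ℕ × Bool)) :
    (flipB bs).map Prod.fst = bs.map Prod.fst := by
  simp [flipB]

/-- `W` is collectable with composition `c`. -/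
def CollC (c : List ℕ) (W : List Bool) : Prop :=
  ∃ bs : List (ℕ × Bool), (∀ b ∈ bs, 0 < b.1) ∧ W = wordOfBlocks bs ∧
    bs.map Prod.fst = c

lemma collC_canonize {c : List ℕ} {W : List Bool} (h : CollC c W) :
    CollC c (canonize W) := by
  obtain ⟨bs, hpos, he, hm⟩ := h
  unfold canonize
  split
  · exact ⟨flipB bs, flipB_pos hpos, by rw [he, map_not_wordOfBlocks],
      by rw [flipB_map_fst, hm]⟩
  · exact ⟨bs, hpos, he, hm⟩

lemma collectable_of_canonize {W : List Bool} (h : Collectable (canonize W)) :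
    Collectable W := by
  unfold canonize at h
  split at h
  · obtain ⟨bs, hpos, he⟩ := h
    refine ⟨flipB bs, flipB_pos hpos, ?_⟩
    have : (W.map (fun b => !b)).map (fun b => !b) = wordOfBlocks (flipB bs) := by
      rw [he, map_not_wordOfBlocks]
    rw [List.map_map] at this
    simpa [Function.comp_def, Bool.not_not] using this
  · exact h

lemma replicate_append_head (t : ℕ) (x : Bool) (L : List Bool) (ht : 0 < t) :
    (List.replicate t x ++ L).head? = some x := by
  obtain ⟨t, rfl⟩ : ∃ t', t = t' + 1 := ⟨t - 1, by omega⟩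
  rw [List.replicate_succ]
  simp

lemma takeWhile_replicate_append (t : ℕ) (x : Bool) (L : List Bool) :
    (List.replicate t x ++ (!x) :: L).takeWhile (fun a => a == x) = List.replicate t x := by
  induction t with
  | zero => simp
  | succ t ih => rw [List.replicate_succ]; simp [List.takeWhile, ih]

lemma block_eq_block {t s : ℕ} {x y : Bool} {W₁ W₂ : List Bool}
    (ht : 0 < t) (hs : 0 < s)
    (h : List.replicate t x ++ (List.replicate t (!x) ++ W₁)
       = List.replicate s y ++ (List.replicate s (!y) ++ W₂)) :
    x = y ∧ t = s ∧ W₁ = W₂ := by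
  have hxy : x = y := by
    have h1 := congrArg List.head? h
    rw [replicate_append_head _ _ _ ht, replicate_append_head _ _ _ hs] at h1
    exact Option.some.inj h1
  subst hxy
  have hrw : ∀ (n : ℕ) (V : List Bool), 0 < n →
      List.replicate n x ++ (List.replicate n (!x) ++ V)
        = List.replicate n x ++ ((!x) :: (List.replicate (n-1) (!x) ++ V)) := by
    intro n V hn
    obtain ⟨n', rfl⟩ : ∃ n', n = n' + 1 := ⟨n - 1, by omega⟩
    congr 1
  have h2 := congrArg (List.takeWhile (fun a => a == x)) h
  rw [hrw t W₁ ht, hrw s W₂ hs, takeWhile_replicate_append,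
    takeWhile_replicate_append] at h2
  have hts : t = s := by
    have := congrArg List.length h2; simpa using this
  subst hts
  refine ⟨rfl, rfl, ?_⟩
  have h3 := List.append_cancel_left h
  exact List.append_cancel_left h3

lemma wordOfBlocks_inj : ∀ (b₁ b₂ : List (ℕ × Bool)),
    (∀ b ∈ b₁, 0 < b.1) → (∀ b ∈ b₂, 0 < b.1) →
    wordOfBlocks b₁ = wordOfBlocks b₂ → b₁ = b₂ := by
  intro b₁
  induction b₁ with
  | nil =>
    intro b₂ _ hpos h
    cases b₂ with
    | nil => rfl
    | cons hd tl =>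
      obtain ⟨t, x⟩ := hd
      have ht : 0 < t := hpos (t, x) (by simp)
      rw [wordOfBlocks_nil, wordOfBlocks_cons] at h
      obtain ⟨t', rfl⟩ : ∃ t', t = t' + 1 := ⟨t - 1, by omega⟩
      rw [List.replicate_succ] at h
      simp at h
  | cons hd tl ih =>
    intro b₂ hpos1 hpos2 h
    obtain ⟨t, x⟩ := hd
    cases b₂ with
    | nil =>
      have ht : 0 < t := hpos1 (t, x) (by simp)
      rw [wordOfBlocks_nil, wordOfBlocks_cons] at h
      obtain ⟨t', rfl⟩ : ∃ t', t = t' + 1 := ⟨t - 1, by omega⟩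
      rw [List.replicate_succ] at h
      simp at h
    | cons hd2 tl2 =>
      obtain ⟨s, y⟩ := hd2
      rw [wordOfBlocks_cons, wordOfBlocks_cons] at h
      obtain ⟨hxy, hts, hW⟩ := block_eq_block
        (hpos1 (t, x) (by simp)) (hpos2 (s, y) (by simp)) h
      subst hxy; subst hts
      rw [ih tl2 (fun b hb => hpos1 b (by simp [hb]))
        (fun b hb => hpos2 b (by simp [hb])) hW]

lemma collC_unique {c₁ c₂ : List ℕ} {W : List Bool}
    (h₁ : CollC c₁ W) (h₂ : CollC c₂ W) : c₁ = c₂ := by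
  obtain ⟨bs₁, hp₁, he₁, hm₁⟩ := h₁
  obtain ⟨bs₂, hp₂, he₂, hm₂⟩ := h₂
  rw [← hm₁, ← hm₂, wordOfBlocks_inj bs₁ bs₂ hp₁ hp₂ (by rw [← he₁, ← he₂])]

end CollC
section Viol

/-- A "violation": a descent/ascent boundary with bad prefix counts. -/
def Viol (W : List Bool) : Prop :=
  ∃ (U V : List Bool) (c : Bool),
    W = U ++ c :: (!c) :: V ∧ U.count c + 2 ≤ U.count (!c)

lemma split_replicate : ∀ (n : ℕ) (a : Bool) (W U : List Bool) (c : Bool)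
    (V : List Bool), List.replicate n a ++ W = U ++ c :: V →
    (∃ k, k < n ∧ U = List.replicate k a ∧ c = a ∧
        V = List.replicate (n - k - 1) a ++ W) ∨
    (∃ U', U = List.replicate n a ++ U' ∧ W = U' ++ c :: V) := by
  intro n
  induction n with
  | zero =>
    intro a W U c V h
    right
    exact ⟨U, by simp, by simpa using h⟩
  | succ n ih =>
    intro a W U c V h
    rw [List.replicate_succ, List.cons_append] at h
    cases U with
    | nil =>
      simp only [List.nil_append] at h
      obtain ⟨h1, h2⟩ := List.cons.injEq _ _ _ _ ▸ h
      left
      exact ⟨0, by omega, rfl, h1.symm, by simpa using h2.symm⟩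
    | cons u U₁ =>
      rw [List.cons_append] at h
      obtain ⟨h1, h2⟩ := List.cons.injEq _ _ _ _ ▸ h
      subst h1
      rcases ih a W U₁ c V h2 with ⟨k, hk, hU, hc, hV⟩ | ⟨U', hU, hW⟩
      · left
        refine ⟨k + 1, by omega, ?_, hc, ?_⟩
        · rw [hU, List.replicate_succ]
        · rw [hV]; congr 2; omega
      · right
        exact ⟨U', by rw [hU, List.replicate_succ, List.cons_append], hW⟩

lemma count_replicate_bool (c x : Bool) (n : ℕ) :
    (List.replicate n x).count c = if c = x then n else 0 := by
  rw [List.count_replicate]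
  cases c <;> cases x <;> simp

lemma wordOfBlocks_not_viol : ∀ (bs : List (ℕ × Bool)),
    (∀ b ∈ bs, 0 < b.1) → ∀ (U V : List Bool) (c : Bool),
    wordOfBlocks bs = U ++ c :: (!c) :: V → U.count c + 2 ≤ U.count (!c) → False := by
  intro bs
  induction bs with
  | nil =>
    intro _ U V c h _
    rw [wordOfBlocks_nil] at h
    exact absurd h.symm (by simp)
  | cons hd tl ih =>
    intro hpos U V c h hcnt
    obtain ⟨t, x⟩ := hd
    have ht : 0 < t := hpos (t, x) (by simp)
    rw [wordOfBlocks_cons] at h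
    rcases split_replicate t x _ U c ((!c) :: V) h with
      ⟨k, hk, hU, hc, hV⟩ | ⟨U', hU, h2⟩
    · subst hc; subst hU
      rw [count_replicate_bool, count_replicate_bool] at hcnt
      rcases c <;> simp at hcnt
    · rcases split_replicate t (!x) _ U' c ((!c) :: V) h2 with
        ⟨k, hk, hU', hc, hV⟩ | ⟨U'', hU', h3⟩
      · -- c = !x, and the next letter must be !c = x, but it lies in the replicate
        subst hc; subst hU'; subst hU
        have hk1 : k + 2 ≤ t := by
          rw [List.count_append, List.count_append,
            count_replicate_bool, count_replicate_bool,
            count_replicate_bool, count_replicate_bool] at hcnt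
          simp [Bool.not_not] at hcnt
          rcases x with _ | _ <;> simp_all
        have h4 : t - k - 1 > 0 := by omega
        rw [show t - k - 1 = (t - k - 2) + 1 by omega, List.replicate_succ,
          List.cons_append] at hV
        obtain ⟨h5, _⟩ := List.cons.injEq _ _ _ _ ▸ hV
        cases x <;> simp at h5
      · subst hU'; subst hU
        refine ih (fun b hb => hpos b (by simp [hb])) U'' V c h3 ?_
        rw [List.count_append, List.count_append, List.count_append,
          List.count_append, count_replicate_bool, count_replicate_bool,
          count_replicate_bool, count_replicate_bool] at hcnt
        cases c <;> cases x <;> simp_all <;> omega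

lemma collectable_not_viol {W : List Bool} (h : Collectable W) (hv : Viol W) :
    False := by
  obtain ⟨bs, hpos, he⟩ := h
  obtain ⟨U, V, c, heq, hcnt⟩ := hv
  exact wordOfBlocks_not_viol bs hpos U V c (he ▸ heq) hcnt

end Viol
section Complete

lemma exists_run : ∀ (W : List Bool) (x : Bool), W.head? = some x →
    ∃ (a : ℕ) (W₂ : List Bool), 0 < a ∧ W = List.replicate a x ++ W₂ ∧
      (W₂ = [] ∨ W₂.head? = some (!x)) := by
  intro W
  induction W with
  | nil => intro x h; simp at h
  | cons w W₁ ih =>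
    intro x h
    have hw : w = x := by simpa using h
    subst hw
    cases W₁ with
    | nil => exact ⟨1, [], by omega, by simp, Or.inl rfl⟩
    | cons y W₂ =>
      by_cases hy : y = w
      · subst hy
        obtain ⟨a, W₃, ha, he, hh⟩ := ih y rfl
        exact ⟨a + 1, W₃, by omega, by rw [List.replicate_succ, List.cons_append,
          ← he], hh⟩
      · have hy' : y = !w := by cases w <;> cases y <;> simp_all
        exact ⟨1, y :: W₂, by omega, by simp, Or.inr (by rw [hy']; rfl)⟩

lemma viol_complete : ∀ (n : ℕ) (W : List Bool), W.length ≤ n →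
    W.count true = W.count false → ¬ Collectable W → Viol W := by
  intro n
  induction n with
  | zero =>
    intro W hlen _ hnc
    exact absurd ⟨[], by simp, by simpa [wordOfBlocks_nil] using (List.length_eq_zero_iff.mp (by omega))⟩ hnc
  | succ n ih =>
    intro W hlen hbal hnc
    obtain ⟨w, hw⟩ : ∃ w, W.head? = some w := by
      cases W with
      | nil => exact absurd ⟨[], by simp, by simp [wordOfBlocks_nil]⟩ hnc
      | cons w W₀ => exact ⟨w, rfl⟩
    obtain ⟨a, W₂, ha, he, hh⟩ := exists_run W w hw
    rcases hh with hh | hh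
    · -- W is a single run, contradicts balance
      subst hh
      rw [he] at hbal
      simp only [List.count_append, count_replicate_bool, List.count_nil] at hbal
      cases w <;> simp_all
    · obtain ⟨b, W₃, hb, he₂, hh₂⟩ := exists_run W₂ (!w) hh
      rcases le_or_gt a b with hab | hab
      · -- peel a block of size a
        set W' := List.replicate (b - a) (!w) ++ W₃ with hW'
        have heW : W = List.replicate a w ++ (List.replicate a (!w) ++ W') := by
          rw [he, he₂, hW']
          congr 1
          rw [← List.append_assoc, ← List.replicate_add,
            show a + (b - a) = b by omega]
        have hbal' : W'.count true = W'.count false := by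
          rw [heW] at hbal
          simp only [List.count_append, count_replicate_bool] at hbal ⊢
          cases w <;> simp_all <;> omega
        have hnc' : ¬ Collectable W' := by
          intro ⟨bs, hpos, hbe⟩
          exact hnc ⟨(a, w) :: bs, by
            intro b hb
            rcases List.mem_cons.mp hb with h | h
            · subst h; exact ha
            · exact hpos _ h, by rw [heW, wordOfBlocks_cons, hbe]⟩
        have hlen' : W'.length ≤ n := by
          have := congrArg List.length heW
          simp at this
          omega
        obtain ⟨U, V, c, hveq, hvcnt⟩ := ih W' hlen' hbal' hnc'
        refine ⟨List.replicate a w ++ (List.replicate a (!w) ++ U), V, c, ?_, ?_⟩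
        · rw [heW, hveq]
          simp [List.append_assoc]
        · simp only [List.count_append, count_replicate_bool]
          cases c <;> cases w <;> simp_all <;> omega
      · -- b < a : explicit violation
        have hW₃ : ∃ V, W₃ = w :: V := by
          rcases hh₂ with h3 | h3
          · -- W₃ empty contradicts balance
            exfalso
            rw [he, he₂, h3] at hbal
            simp only [List.count_append, count_replicate_bool,
              List.count_nil] at hbal
            cases w <;> simp_all <;> omega
          · cases W₃ with
            | nil => simp at h3
            | cons z V =>
              refine ⟨V, ?_⟩
              have : z = !(!w) := by simpa using h3
              rw [this, Bool.not_not]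
        obtain ⟨V, hV⟩ := hW₃
        refine ⟨List.replicate a w ++ List.replicate (b - 1) (!w), V, !w, ?_, ?_⟩
        · rw [he, he₂, hV]
          rw [show b = (b - 1) + 1 by omega, List.replicate_succ', Bool.not_not]
          simp [List.append_assoc]
        · simp only [List.count_append, count_replicate_bool, Bool.not_not]
          cases w <;> simp_all <;> omega

end Complete
section Dec

/-- decrement the block containing position `j` in a composition -/
def decAt : List ℕ → ℕ → List ℕ
  | [], _ => []
  | t :: c, j => if j ≤ t then (if t ≤ 1 then c else (t - 1) :: c)
      else t :: decAt c (j - t)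

/-- decrement the block containing position `j` -/
def decB : List (ℕ × Bool) → ℕ → List (ℕ × Bool)
  | [], _ => []
  | (t, x) :: bs, j => if j ≤ t then (if t ≤ 1 then bs else (t - 1, x) :: bs)
      else (t, x) :: decB bs (j - t)

lemma decB_map_fst : ∀ (bs : List (ℕ × Bool)) (j : ℕ),
    (decB bs j).map Prod.fst = decAt (bs.map Prod.fst) j := by
  intro bs
  induction bs with
  | nil => intro j; rfl
  | cons hd tl ih =>
    intro j
    obtain ⟨t, x⟩ := hd
    simp only [decB, decAt, List.map_cons]
    split
    · split <;> simp
    · simp [ih]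

lemma decB_pos : ∀ (bs : List (ℕ × Bool)) (j : ℕ), (∀ b ∈ bs, 0 < b.1) →
    ∀ b ∈ decB bs j, 0 < b.1 := by
  intro bs
  induction bs with
  | nil => intro j _ b hb; simp [decB] at hb
  | cons hd tl ih =>
    intro j hpos b hb
    obtain ⟨t, x⟩ := hd
    have htl : ∀ b ∈ tl, 0 < b.1 := fun b hb => hpos b (by simp [hb])
    simp only [decB] at hb
    split at hb
    · split at hb
      · exact htl b hb
      · rcases List.mem_cons.mp hb with h | h
        · subst h; simp; omega
        · exact htl b h
    · rcases List.mem_cons.mp hb with h | h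
      · subst h; exact hpos (t, x) (by simp)
      · exact ih _ htl b h

lemma decAt_sum : ∀ (c : List ℕ) (j : ℕ), (∀ x ∈ c, 0 < x) → 1 ≤ j →
    j ≤ c.sum → (decAt c j).sum = c.sum - 1 := by
  intro c
  induction c with
  | nil => intro j _ h1 h2; simp at h2; omega
  | cons t c ih =>
    intro j hpos h1 h2
    simp only [decAt]
    split
    · split <;> simp_all <;> omega
    · have := ih (j - t) (fun x hx => hpos x (by simp [hx])) (by omega)
        (by simp at h2; omega)
      simp only [List.sum_cons] at h2 ⊢
      rw [this]
      have ht : 0 < t := hpos t (by simp)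
      have : 1 ≤ (c.sum) := by omega
      omega

lemma decB_remove : ∀ (bs : List (ℕ × Bool)) (j : ℕ), (∀ b ∈ bs, 0 < b.1) →
    1 ≤ j → j ≤ (bs.map Prod.fst).sum →
    removeOcc true (j - 1) (removeOcc false (j - 1) (wordOfBlocks bs))
      = wordOfBlocks (decB bs j) := by
  intro bs
  induction bs with
  | nil => intro j _ h1 h2; simp at h2; omega
  | cons hd tl ih =>
    intro j hpos h1 h2
    obtain ⟨t, x⟩ := hd
    have ht : 0 < t := hpos (t, x) (by simp)
    have htl : ∀ b ∈ tl, 0 < b.1 := fun b hb => hpos b (by simp [hb])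
    rw [wordOfBlocks_cons]
    by_cases hjt : j ≤ t
    · -- delete inside the first block
      have hj1 : j - 1 < t := by omega
      have hres : removeOcc true (j - 1) (removeOcc false (j - 1)
          (List.replicate t x ++ (List.replicate t (!x) ++ wordOfBlocks tl)))
          = List.replicate (t-1) x ++ (List.replicate (t-1) (!x) ++ wordOfBlocks tl) := by
        cases x with
        | false =>
          simp only [Bool.not_false]
          rw [removeOcc_append_left false (j-1) _ _
              (by rw [count_replicate_bool]; simpa using hj1),
            removeOcc_replicate_self false (j-1) t hj1]
          have c0 : (List.replicate (t-1) false).count true = 0 := by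
            rw [count_replicate_bool]; simp
          rw [removeOcc_append_right true (j-1) _ _ (by rw [c0]; omega), c0,
            Nat.sub_zero,
            removeOcc_append_left true (j-1) _ _
              (by rw [count_replicate_bool]; simpa using hj1),
            removeOcc_replicate_self true (j-1) t hj1]
        | true =>
          simp only [Bool.not_true]
          have c0 : (List.replicate t true).count false = 0 := by
            rw [count_replicate_bool]; simp
          rw [removeOcc_append_right false (j-1) _ _ (by rw [c0]; omega), c0,
            Nat.sub_zero,
            removeOcc_append_left false (j-1) _ _
              (by rw [count_replicate_bool]; simpa using hj1),
            removeOcc_replicate_self false (j-1) t hj1,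
            removeOcc_append_left true (j-1) _ _
              (by rw [count_replicate_bool]; simpa using hj1),
            removeOcc_replicate_self true (j-1) t hj1]
      rw [hres]
      simp only [decB, if_pos hjt]
      by_cases ht1 : t ≤ 1
      · have : t = 1 := by omega
        subst this
        simp
      · rw [if_neg ht1, wordOfBlocks_cons]
    · -- delete in the tail
      have hct : j - 1 ≥ t := by omega
      have hcount : ∀ c : Bool,
          (List.replicate t x ++ List.replicate t (!x)).count c = t := by
        intro c
        rw [List.count_append, count_replicate_bool, count_replicate_bool]
        cases c <;> cases x <;> simp
      have hassoc : List.replicate t x ++ (List.replicate t (!x) ++ wordOfBlocks tl)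
          = (List.replicate t x ++ List.replicate t (!x)) ++ wordOfBlocks tl := by
        simp [List.append_assoc]
      rw [hassoc,
        removeOcc_append_right false (j-1) _ _ (by rw [hcount]; omega),
        hcount,
        removeOcc_append_right true (j-1) _ _ (by rw [hcount]; omega),
        hcount,
        show j - 1 - t = (j - t) - 1 by omega,
        ih (j - t) htl (by omega)
          (by simp only [List.map_cons, List.sum_cons] at h2; omega)]
      simp only [decB, if_neg hjt]
      rw [wordOfBlocks_cons]
      simp [List.append_assoc]

end Dec
section Builders

lemma delete_collC {bs : List (ℕ × Bool)} {j : ℕ} (hpos : ∀ b ∈ bs, 0 < b.1)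
    (h1 : 1 ≤ j) (h2 : j ≤ (bs.map Prod.fst).sum) :
    CollC (decAt (bs.map Prod.fst) j) (deleteLetter j (wordOfBlocks bs)) := by
  unfold deleteLetter
  rw [decB_remove bs j hpos h1 h2]
  exact collC_canonize ⟨decB bs j, decB_pos bs j hpos, rfl, decB_map_fst bs j⟩

lemma collC_collectable {c : List ℕ} {W : List Bool} (h : CollC c W) :
    Collectable W := by
  obtain ⟨bs, hpos, he, _⟩ := h
  exact ⟨bs, hpos, he⟩

lemma collC_hbs {c : List ℕ} {W : List Bool} {n : ℕ} (h : CollC c W)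
    (hs : c.sum = n) : HasBlockSplitting n W := by
  obtain ⟨bs, hpos, he, hm⟩ := h
  exact ⟨bs, hpos, by rw [hm, hs], he⟩

lemma mk_both {n : ℕ} {c₁ c₂ : List ℕ} {W₁ W₂ : List Bool}
    (h₁ : CollC c₁ W₁) (h₂ : CollC c₂ W₂) (hne : c₁ ≠ c₂)
    (hs₁ : c₁.sum = n) (hs₂ : c₂.sum = n) : Mismatch n W₁ W₂ := by
  constructor
  · intro he
    exact hne (collC_unique h₁ (he ▸ h₂))
  · refine Or.inr (Or.inr ⟨collC_hbs h₁ hs₁, collC_hbs h₂ hs₂, ?_⟩)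
    rintro ⟨b₁, b₂, hp₁, hp₂, he₁, he₂, hm⟩
    exact hne (by
      rw [collC_unique h₁ ⟨b₁, hp₁, he₁, rfl⟩, collC_unique h₂ ⟨b₂, hp₂, he₂, rfl⟩,
        hm])

lemma mk_one {n : ℕ} {c : List ℕ} {W₁ W₂ : List Bool}
    (h₁ : CollC c W₁) (hs : c.sum = n) (h₂ : ¬ Collectable W₂) :
    Mismatch n W₁ W₂ := by
  constructor
  · rintro rfl
    exact h₂ (collC_collectable h₁)
  · exact Or.inl ⟨collC_hbs h₁ hs, fun h => h₂ (collectable_of_hbs h)⟩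

lemma mismatch_symm {n : ℕ} {W₁ W₂ : List Bool} (h : Mismatch n W₁ W₂) :
    Mismatch n W₂ W₁ := by
  obtain ⟨hne, h⟩ := h
  refine ⟨Ne.symm hne, ?_⟩
  rcases h with ⟨h1, h2⟩ | ⟨h1, h2⟩ | ⟨h1, h2, h3⟩
  · exact Or.inr (Or.inl ⟨h2, h1⟩)
  · exact Or.inl ⟨h2, h1⟩
  · refine Or.inr (Or.inr ⟨h2, h1, ?_⟩)
    rintro ⟨b₁, b₂, hp₁, hp₂, he₁, he₂, hm⟩
    exact h3 ⟨b₂, b₁, hp₂, hp₁, he₂, he₁, hm.symm⟩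

end Builders

section CompDiff

lemma comp_diff : ∀ (c₁ c₂ : List ℕ) (r : ℕ), 3 ≤ r → (∀ x ∈ c₁, 0 < x) →
    (∀ x ∈ c₂, 0 < x) → c₁.sum = r → c₂.sum = r → c₁ ≠ c₂ →
    ∃ j, 1 ≤ j ∧ j ≤ r ∧ decAt c₁ j ≠ decAt c₂ j := by
  -- an asymmetric helper assuming head of c₁ < head of c₂, handled below
  have key : ∀ (s : ℕ) (σ : List ℕ) (t : ℕ) (τ : List ℕ) (r : ℕ), 3 ≤ r →
      (∀ x ∈ s :: σ, 0 < x) → (∀ x ∈ t :: τ, 0 < x) →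
      (s :: σ).sum = r → (t :: τ).sum = r → s < t →
      ∃ j, 1 ≤ j ∧ j ≤ r ∧ decAt (s :: σ) j ≠ decAt (t :: τ) j := by
    intro s σ t τ r hr hp1 hp2 hs1 hs2 hst
    have hs : 0 < s := hp1 s (by simp)
    have ht : 0 < t := hp2 t (by simp)
    by_cases hs1' : s = 1
    · subst hs1'
      have hd1 : decAt (1 :: σ) 1 = σ := by simp [decAt]
      have hd2 : decAt (t :: τ) 1 = (t - 1) :: τ := by
        rw [decAt, if_pos (by omega), if_neg (by omega)]
      by_cases hστ : σ = (t - 1) :: τ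
      · -- σ = (t-1) :: τ
        subst hστ
        cases τ with
        | nil =>
          -- c₁ = [1, t-1], c₂ = [t], t = r
          have htr : t = r := by simpa using hs2
          refine ⟨t, by omega, by omega, ?_⟩
          have e1 : decAt (1 :: (t - 1) :: []) t = 1 :: (t - 1 - 1) :: [] := by
            rw [decAt, if_neg (by omega), decAt, if_pos (by omega),
              if_neg (by omega)]
          have e2 : decAt (t :: []) t = (t - 1) :: [] := by
            rw [decAt, if_pos (le_refl t), if_neg (by omega)]
          rw [e1, e2]
          simp
        | cons u τ' =>
          have hu : 0 < u := hp1 u (by simp)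
          have hbnd : t + 1 ≤ r := by
            have h2' := hs2
            simp only [List.sum_cons] at h2'
            omega
          refine ⟨t + 1, by omega, hbnd, ?_⟩
          · have e1 : decAt (1 :: (t - 1) :: u :: τ') (t + 1)
                = 1 :: (t - 1) :: decAt (u :: τ') 1 := by
              rw [decAt, if_neg (by omega), show t + 1 - 1 = t by omega,
                decAt, if_neg (by omega), show t - (t - 1) = 1 by omega]
            have e2 : decAt (t :: u :: τ') (t + 1) = t :: decAt (u :: τ') 1 := by
              rw [decAt, if_neg (by omega), show t + 1 - t = 1 by omega]
            rw [e1, e2]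
            intro h
            have := List.cons.injEq _ _ _ _ ▸ h
            omega
      · exact ⟨1, le_refl 1, by omega, by rw [hd1, hd2]; exact hστ⟩
    · -- 2 ≤ s < t
      refine ⟨1, le_refl 1, by omega, ?_⟩
      rw [decAt, if_pos (by omega), if_neg (by omega),
        decAt, if_pos (by omega), if_neg (by omega)]
      intro h
      have := List.cons.injEq _ _ _ _ ▸ h
      omega
  intro c₁ c₂ r hr hp1 hp2 hs1 hs2 hne
  cases c₁ with
  | nil => simp at hs1; omega
  | cons s σ =>
  cases c₂ with
  | nil => simp at hs2; omega
  | cons t τ =>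
  rcases lt_trichotomy s t with h | h | h
  · exact key s σ t τ r hr hp1 hp2 hs1 hs2 h
  · -- equal heads
    subst h
    have hστ : σ ≠ τ := by intro h; exact hne (by rw [h])
    refine ⟨1, le_refl 1, by omega, ?_⟩
    have hs : 0 < s := hp1 s (by simp)
    by_cases hs1' : s = 1
    · subst hs1'
      simpa [decAt] using hστ
    · rw [decAt, if_pos (by omega), if_neg (by omega),
        decAt, if_pos (by omega), if_neg (by omega)]
      intro h
      exact hστ (List.tail_eq_of_cons_eq h)
  · obtain ⟨j, hj1, hj2, hj3⟩ := key t τ s σ r hr hp2 hp1 hs2 hs1 h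
    exact ⟨j, hj1, hj2, hj3.symm⟩

end CompDiff
section Survive

lemma not_coll_delete {j : ℕ} {Q : List Bool}
    (h : Viol (removeOcc true (j - 1) (removeOcc false (j - 1) Q))) :
    ¬ Collectable (deleteLetter j Q) := by
  intro hc
  exact collectable_not_viol (collectable_of_canonize hc) h

lemma survive_small {U V : List Bool} {c : Bool}
    (hf : 0 < U.count false) (ht : 0 < U.count true) :
    removeOcc true 0 (removeOcc false 0 (U ++ c :: (!c) :: V))
      = (removeOcc true 0 (removeOcc false 0 U)) ++ c :: (!c) :: V := by
  rw [removeOcc_append_left false 0 _ _ hf,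
    removeOcc_append_left true 0 _ _ (by rwa [count_removeOcc_ne false true (by simp)])]

lemma viol_survive_small {U V : List Bool} {c : Bool}
    (hcnt : U.count c + 2 ≤ U.count (!c))
    (hf : 0 < U.count false) (ht : 0 < U.count true) :
    Viol (removeOcc true 0 (removeOcc false 0 (U ++ c :: (!c) :: V))) := by
  rw [survive_small hf ht]
  refine ⟨_, V, c, rfl, ?_⟩
  have h1 : (removeOcc false 0 U).count true = U.count true :=
    count_removeOcc_ne false true (by simp) 0 U
  have h2 : (removeOcc false 0 U).count false = U.count false - 1 :=
    count_removeOcc_self false 0 U hf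
  have h3 : (removeOcc true 0 (removeOcc false 0 U)).count false
      = U.count false - 1 := by
    rw [count_removeOcc_ne true false (by simp), h2]
  have h4 : (removeOcc true 0 (removeOcc false 0 U)).count true
      = U.count true - 1 := by
    rw [count_removeOcc_self true 0 _ (by omega), h1]
  cases c
  · rw [Bool.not_false] at *
    rw [h3, h4]
    omega
  · rw [Bool.not_true] at *
    rw [h3, h4]
    omega

lemma viol_survive_big {U V : List Bool} {m : ℕ}
    (h0 : U.count true = 0) (hm : U.count false = m) :
    Viol (removeOcc true (m + 1) (removeOcc false (m + 1)
      (U ++ true :: false :: V))) ∨ ¬ (U.count true + 2 ≤ U.count false) := by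
  by_cases hcnt : U.count true + 2 ≤ U.count false
  · left
    have hassoc : U ++ true :: false :: V = (U ++ [true, false]) ++ V := by
      simp
    have hcf : (U ++ [true, false]).count false = m + 1 := by
      simp [List.count_append, hm]
    have hct : (U ++ [true, false]).count true = 1 := by
      simp [List.count_append, h0]
    rw [hassoc,
      removeOcc_append_right false (m+1) _ _ (by rw [hcf]),
      hcf, Nat.sub_self,
      removeOcc_append_right true (m+1) _ _ (by rw [hct]; omega),
      hct]
    refine ⟨U, removeOcc true (m + 1 - 1) (removeOcc false 0 V), true, by simp, ?_⟩
    rw [Bool.not_true]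
    omega
  · right; exact hcnt

lemma eq_replicate_false {U : List Bool} (h : U.count true = 0) :
    U = List.replicate (U.count false) false := by
  induction U with
  | nil => simp
  | cons a U ih =>
    cases a
    · simp only [List.count_cons] at h ⊢
      simp at h ⊢
      rw [List.replicate_succ]
      exact (ih h) ▸ rfl
    · simp [List.count_cons] at h
  
lemma eq_replicate_true {U : List Bool} (h : U.count false = 0) :
    U = List.replicate (U.count true) true := by
  induction U with
  | nil => simp
  | cons a U ih =>
    cases a
    · simp [List.count_cons] at h
    · simp only [List.count_cons] at h ⊢
      simp at h ⊢
      rw [List.replicate_succ]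
      exact (ih h) ▸ rfl

/-- deletion at j=2 on the exceptional word `A^{r-1} B A B^{r-1}`, r ≥ 4 -/
lemma exceptional_viol {r : ℕ} (hr : 4 ≤ r) :
    Viol (removeOcc true 1 (removeOcc false 1
      (List.replicate (r-1) false ++ true :: false :: List.replicate (r-1) true))) := by
  have h1 : removeOcc false 1 (List.replicate (r-1) false
      ++ true :: false :: List.replicate (r-1) true)
      = List.replicate (r-2) false ++ true :: false :: List.replicate (r-1) true := by
    rw [removeOcc_append_left false 1 _ _
        (by rw [count_replicate_bool]; simp; omega),
      removeOcc_replicate_self false 1 (r-1) (by omega),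
      show r - 1 - 1 = r - 2 by omega]
  rw [h1]
  have hassoc : List.replicate (r-2) false ++ true :: false :: List.replicate (r-1) true
      = (List.replicate (r-2) false ++ [true, false]) ++ List.replicate (r-1) true := by
    simp
  have hct : (List.replicate (r-2) false ++ [true, false]).count true = 1 := by
    rw [List.count_append, count_replicate_bool]; simp
  rw [hassoc,
    removeOcc_append_right true 1 _ _ (by rw [hct]),
    hct, Nat.sub_self,
    removeOcc_replicate_self true 0 (r-1) (by omega)]
  refine ⟨List.replicate (r-2) false, List.replicate (r-1-1) true, true, by simp, ?_⟩
  rw [Bool.not_true, count_replicate_bool, count_replicate_bool]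
  simp
  omega

end Survive
section Main

lemma enum3 (c : List ℕ) (hpos : ∀ x ∈ c, 0 < x) (hs : c.sum = 3) :
    c = [3] ∨ c = [2, 1] ∨ c = [1, 2] ∨ c = [1, 1, 1] := by
  match c with
  | [] => simp at hs
  | [a] =>
    left
    simp at hs
    rw [hs]
  | [a, b] =>
    have ha := hpos a (by simp)
    have hb := hpos b (by simp)
    simp at hs
    have : a = 2 ∧ b = 1 ∨ a = 1 ∧ b = 2 := by omega
    rcases this with ⟨rfl, rfl⟩ | ⟨rfl, rfl⟩
    · right; left; rfl
    · right; right; left; rfl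
  | a :: b :: d :: e =>
    have ha := hpos a (by simp)
    have hb := hpos b (by simp)
    have hd := hpos d (by simp)
    have hs' : a + (b + (d + e.sum)) = 3 := by simpa using hs
    have habd : e.sum = 0 ∧ a = 1 ∧ b = 1 ∧ d = 1 := by omega
    obtain ⟨hesum, rfl, rfl, rfl⟩ := habd
    have hee : e = [] := by
      cases e with
      | nil => rfl
      | cons f e' =>
        have hf := hpos f (by simp)
        simp at hesum
        omega
    rw [hee]
    right; right; right; rfl

lemma key_one {r : ℕ} (hr : 3 ≤ r) {P Q : List Bool} (hQ : IsPattern r Q)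
    (hPc : HasBlockSplitting r P) (hQnc : ¬ HasBlockSplitting r Q) :
    ∃ j, 1 ≤ j ∧ j ≤ r ∧ Mismatch (r - 1) (deleteLetter j P) (deleteLetter j Q) := by
  obtain ⟨bsP, hposP, hsumP, heP⟩ := hPc
  have hposC : ∀ x ∈ bsP.map Prod.fst, 0 < x := by
    intro x hx
    simp only [List.mem_map] at hx
    obtain ⟨p, hp, rfl⟩ := hx
    exact hposP p hp
  have hQt : Q.count true = r := hQ.2.1
  have hQf : Q.count false = r := by
    have := count_true_add_count_false Q
    rw [hQ.1, hQt] at this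
    omega
  have hQnc' : ¬ Collectable Q := fun hc => hQnc (hbs_of_collC hc hQt)
  have conclude : ∀ j, 1 ≤ j → j ≤ r →
      Viol (removeOcc true (j - 1) (removeOcc false (j - 1) Q)) →
      Mismatch (r - 1) (deleteLetter j P) (deleteLetter j Q) := by
    intro j h1 h2 hv
    refine mk_one (heP ▸ delete_collC hposP h1 (by rw [hsumP]; exact h2)) ?_
      (not_coll_delete hv)
    rw [decAt_sum _ j hposC h1 (by rw [hsumP]; exact h2), hsumP]
  obtain ⟨U, V, c, hQeq, hcnt⟩ :=
    viol_complete Q.length Q le_rfl (by rw [hQt, hQf]) hQnc'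
  cases c with
  | false =>
    simp only [Bool.not_false] at hQeq hcnt
    have hfU : 0 < U.count false := by
      cases U with
      | nil => simp at hcnt
      | cons u U' =>
        have : u = false := by
          have h := hQ.2.2
          rw [hQeq] at h
          simpa using h
        subst this
        simp [List.count_cons]
    have htU : 0 < U.count true := by omega
    refine ⟨1, le_refl 1, by omega, conclude 1 (le_refl 1) (by omega) ?_⟩
    rw [hQeq]
    simpa using viol_survive_small (c := false) (by simpa using hcnt) hfU htU
  | true =>
    simp only [Bool.not_true] at hQeq hcnt
    by_cases h0 : U.count true = 0
    · have hm2 : 2 ≤ U.count false := by omega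
      have hcfQ : U.count false + 1 ≤ r := by
        rw [hQeq] at hQf
        simp [List.count_append, List.count_cons] at hQf
        omega
      by_cases hmr : U.count false + 2 ≤ r
      · refine ⟨U.count false + 2, by omega, hmr,
          conclude _ (by omega) hmr ?_⟩
        rw [hQeq, show U.count false + 2 - 1 = U.count false + 1 by omega]
        rcases viol_survive_big (V := V) h0 rfl with hv | hv
        · exact hv
        · omega
      · -- exceptional word
        have hm : U.count false = r - 1 := by omega
        have hVf : V.count false = 0 := by
          rw [hQeq] at hQf
          simp [List.count_append, List.count_cons] at hQf
          omega
        have hVt : V.count true = r - 1 := by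
          rw [hQeq] at hQt
          simp [List.count_append, List.count_cons] at hQt
          omega
        have hUrep : U = List.replicate (r - 1) false := by
          rw [← hm]; exact eq_replicate_false h0
        have hVrep : V = List.replicate (r - 1) true := by
          rw [← hVt]; exact eq_replicate_true hVf
        by_cases hr4 : 4 ≤ r
        · refine ⟨2, by omega, by omega, conclude 2 (by omega) (by omega) ?_⟩
          rw [hQeq, hUrep, hVrep]
          exact exceptional_viol hr4
        · -- r = 3 : enumerate the compositions of P
          have hr3 : r = 3 := by omega
          subst hr3
          have hQconc : Q = [false, false, true, false, true, true] := by
            rw [hQeq, hUrep, hVrep]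
            rfl
          have hQ1 : deleteLetter 1 Q = [false, false, true, true] := by
            rw [hQconc]; decide
          have hQ2 : deleteLetter 2 Q = [false, true, false, true] := by
            rw [hQconc]; decide
          have hQ3 : deleteLetter 3 Q = [false, false, true, true] := by
            rw [hQconc]; decide
          have hC2 : CollC [2] [false, false, true, true] :=
            ⟨[(2, false)], by decide, by decide, by decide⟩
          have hC11 : CollC [1, 1] [false, true, false, true] :=
            ⟨[(1, false), (1, false)], by decide, by decide, by decide⟩
          have hPdel : ∀ j, 1 ≤ j → j ≤ 3 →
              CollC (decAt (bsP.map Prod.fst) j) (deleteLetter j P) :=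
            fun j h1 h2 => heP ▸ delete_collC hposP h1 (by rw [hsumP]; exact h2)
          rcases enum3 _ hposC hsumP with hc | hc | hc | hc
          · -- cP = [3] : use j = 2
            refine ⟨2, by omega, by omega, ?_⟩
            rw [hQ2]
            exact mk_both (by simpa [hc] using hPdel 2 (by omega) (by omega))
              hC11 (by decide) (by decide) (by decide)
          · -- cP = [2,1] : use j = 1
            refine ⟨1, by omega, by omega, ?_⟩
            rw [hQ1]
            exact mk_both (by simpa [hc] using hPdel 1 (by omega) (by omega))
              hC2 (by decide) (by decide) (by decide)
          · -- cP = [1,2] : use j = 3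
            refine ⟨3, by omega, by omega, ?_⟩
            rw [hQ3]
            exact mk_both (by simpa [hc] using hPdel 3 (by omega) (by omega))
              hC2 (by decide) (by decide) (by decide)
          · -- cP = [1,1,1] : use j = 1
            refine ⟨1, by omega, by omega, ?_⟩
            rw [hQ1]
            exact mk_both (by simpa [hc] using hPdel 1 (by omega) (by omega))
              hC2 (by decide) (by decide) (by decide)
    · have htU : 0 < U.count true := by omega
      have hfU : 0 < U.count false := by omega
      refine ⟨1, le_refl 1, by omega, conclude 1 (le_refl 1) (by omega) ?_⟩
      rw [hQeq]
      simpa using viol_survive_small (c := true) (by simpa using hcnt) hfU htU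

end Main
/-- For `r ≥ 3`, every mismatched pair `{P, Q}` of `r`-patterns admits an index
`1 ≤ j ≤ r` such that `{P^{−j}, Q^{−j}}` is a mismatched pair of `(r−1)`-patterns. -/
theorem mismatch_inheritance (r : ℕ) (hr : 3 ≤ r) (P Q : List Bool)
    (hP : IsPattern r P) (hQ : IsPattern r Q) (h : Mismatch r P Q) :
    ∃ j : ℕ, 1 ≤ j ∧ j ≤ r ∧ Mismatch (r - 1) (deleteLetter j P) (deleteLetter j Q) := by
  obtain ⟨hne, hcase⟩ := h
  rcases hcase with ⟨hPc, hQnc⟩ | ⟨hPnc, hQc⟩ | ⟨hPc, hQc, hnsame⟩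
  · exact key_one hr hQ hPc hQnc
  · obtain ⟨j, h1, h2, hm⟩ := key_one hr hP hQc hPnc
    exact ⟨j, h1, h2, mismatch_symm hm⟩
  · obtain ⟨bsP, hposP, hsumP, heP⟩ := hPc
    obtain ⟨bsQ, hposQ, hsumQ, heQ⟩ := hQc
    have hposCP : ∀ x ∈ bsP.map Prod.fst, 0 < x := by
      intro x hx
      simp only [List.mem_map] at hx
      obtain ⟨p, hp, rfl⟩ := hx
      exact hposP p hp
    have hposCQ : ∀ x ∈ bsQ.map Prod.fst, 0 < x := by
      intro x hx
      simp only [List.mem_map] at hx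
      obtain ⟨p, hp, rfl⟩ := hx
      exact hposQ p hp
    have hcc : bsP.map Prod.fst ≠ bsQ.map Prod.fst := by
      intro hcc
      exact hnsame ⟨bsP, bsQ, hposP, hposQ, heP, heQ, hcc⟩
    obtain ⟨j, h1, h2, hd⟩ := comp_diff _ _ r hr hposCP hposCQ hsumP hsumQ hcc
    refine ⟨j, h1, h2, mk_both
      (heP ▸ delete_collC hposP h1 (by rw [hsumP]; exact h2))
      (heQ ▸ delete_collC hposQ h1 (by rw [hsumQ]; exact h2)) hd ?_ ?_⟩
    · rw [decAt_sum _ j hposCP h1 (by rw [hsumP]; exact h2), hsumP]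
    · rw [decAt_sum _ j hposCQ h1 (by rw [hsumQ]; exact h2), hsumQ]
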